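/- Let X be a finite set with |X| ≥ 1. Suppose r : {(D∖x, D) : x ∈ D ⊆ X} → ℝ satisfies (i) Σ_{x∈X} r(X∖x, X) = 1, (ii) for every nonempty D ⊊ X, Σ_{x∈D} r(D∖x, D) = Σ_{y∉D} r(D, D∪y), and (iii) for every x ∈ D ⊆ X with D nonempty, Σ_{E ⊇ D} r(E∖x, E) ≥ 0. Define ρ̂(D, x) = Σ_{E ⊇ D} r(E∖x, E). Then ρ̂ is a complete dataset: ρ̂(D,x) ≥ 0 for all x ∈ D, Σ_{x∈D} ρ̂(D,x) = 1 for every nonempty D ⊆ X, and K(ρ̂, D, x) = r(D∖x, D) for all x ∈ D ⊆ X. -/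
import Mathlib


open Finset

variable {α : Type*} [Fintype α] [DecidableEq α]

/-- The Block–Marschak polynomial `K(ρ, D, x) = ∑_{E ⊇ D} (-1)^{|E \ D|} ρ(E, x)`. -/
noncomputable def bmK (ρ : Finset α → α → ℝ) (D : Finset α) (x : α) : ℝ :=
  ∑ E : Finset α, if D ⊆ E then (-1 : ℝ) ^ (E \ D).card * ρ E x else 0

/-- Alternating sum over intervals `[D, F]` in the subset lattice. -/
lemma aux_inner (D F : Finset α) :
    (∑ E : Finset α, if D ⊆ E ∧ E ⊆ F then (-1 : ℝ) ^ (E \ D).card else 0)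
      = if F = D then 1 else 0 := by
  by_cases hDF : D ⊆ F
  · rw [← Finset.sum_filter]
    have : ∑ E ∈ Finset.univ.filter (fun E : Finset α => D ⊆ E ∧ E ⊆ F),
        (-1 : ℝ) ^ (E \ D).card = ∑ S ∈ (F \ D).powerset, (-1 : ℝ) ^ S.card := by
      refine Finset.sum_nbij' (fun E => E \ D) (fun S => S ∪ D) ?_ ?_ ?_ ?_ ?_
      · intro E hE
        simp only [Finset.mem_filter, Finset.mem_univ, true_and] at hE
        exact Finset.mem_powerset.2 (Finset.sdiff_subset_sdiff hE.2 le_rfl)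
      · intro S hS
        simp only [Finset.mem_powerset] at hS
        simp only [Finset.mem_filter, Finset.mem_univ, true_and]
        exact ⟨Finset.subset_union_right, Finset.union_subset
          (hS.trans Finset.sdiff_subset) hDF⟩
      · intro E hE
        simp only [Finset.mem_filter, Finset.mem_univ, true_and] at hE
        exact Finset.sdiff_union_of_subset hE.1
      · intro S hS
        simp only [Finset.mem_powerset] at hS
        exact Finset.union_sdiff_cancel_right
          (Disjoint.mono_left hS Finset.sdiff_disjoint)
      · intro E _; rfl
    rw [this]
    have hz : ∑ S ∈ (F \ D).powerset, (-1 : ℝ) ^ S.card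
        = ((∑ S ∈ (F \ D).powerset, (-1 : ℤ) ^ S.card : ℤ) : ℝ) := by
      push_cast; rfl
    rw [hz, Finset.sum_powerset_neg_one_pow_card]
    by_cases hFD : F = D
    · simp [hFD]
    · have : F \ D ≠ ∅ := by
        intro h
        exact hFD (Finset.Subset.antisymm
          (by rw [← Finset.sdiff_union_of_subset hDF, h]; simp) hDF)
      simp [this, hFD]
  · have h0 : ∀ E : Finset α,
        (if D ⊆ E ∧ E ⊆ F then (-1 : ℝ) ^ (E \ D).card else 0) = 0 := by
      intro E
      rw [if_neg]
      rintro ⟨h1, h2⟩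
      exact hDF (h1.trans h2)
    rw [Finset.sum_congr rfl fun E _ => h0 E, Finset.sum_const, smul_zero,
      if_neg (fun h => hDF (by rw [h]))]

/-- A flow `r` (indexed by arcs `(D∖x, D)`, encoded as pairs `(D, x)` with `x ∈ D`)
satisfying the source condition, flow conservation, and nonnegativity of the
cumulative sums induces a complete dataset `ρ̂(D,x) = ∑_{E ⊇ D} r(E∖x, E)` whose
Block–Marschak polynomials recover `r`. -/
theorem stmt_4 [Nonempty α] (r : Finset α → α → ℝ)
    (h1 : ∑ x : α, r Finset.univ x = 1)
    (h2 : ∀ D : Finset α, D.Nonempty → D ≠ Finset.univ →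
      ∑ x ∈ D, r D x = ∑ y ∈ Dᶜ, r (insert y D) y)
    (h3 : ∀ (D : Finset α) (x : α), x ∈ D →
      0 ≤ ∑ E : Finset α, if D ⊆ E then r E x else 0)
    (ρ : Finset α → α → ℝ)
    (hρ : ρ = fun D x => ∑ E : Finset α, if D ⊆ E then r E x else 0) :
    (∀ (D : Finset α) (x : α), x ∈ D → 0 ≤ ρ D x) ∧
    (∀ D : Finset α, D.Nonempty → ∑ x ∈ D, ρ D x = 1) ∧
    (∀ (D : Finset α) (x : α), x ∈ D → bmK ρ D x = r D x) := by
  subst hρ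
  refine ⟨h3, ?_, ?_⟩
  · -- normalization
    intro D hD
    -- LHS as a sum over supersets
    have step1 : ∑ x ∈ D, ∑ E : Finset α, (if D ⊆ E then r E x else 0)
        = ∑ E : Finset α, (if D ⊆ E then ∑ x ∈ D, r E x else 0) := by
      rw [Finset.sum_comm]
      refine Finset.sum_congr rfl fun E _ => ?_
      by_cases h : D ⊆ E <;> simp [h]
    -- key reindexing: outflow from the up-set equals sum over `E ⊇ D` of `∑ x ∈ E \ D`
    have hAB : ∑ E : Finset α, (if D ⊆ E then ∑ y ∈ Eᶜ, r (insert y E) y else 0)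
        = ∑ E : Finset α, (if D ⊆ E then ∑ x ∈ E \ D, r E x else 0) := by
      have lhs' : ∑ E : Finset α, (if D ⊆ E then ∑ y ∈ Eᶜ, r (insert y E) y else 0)
          = ∑ y : α, ∑ E : Finset α,
              (if D ⊆ E ∧ y ∉ E then r (insert y E) y else 0) := by
        rw [Finset.sum_comm]
        refine Finset.sum_congr rfl fun E _ => ?_
        by_cases h : D ⊆ E
        · simp only [h, if_true, true_and]
          rw [← Finset.sum_filter]
          refine Finset.sum_congr ?_ fun _ _ => rfl
          ext y; simp
        · simp [h]
      have rhs' : ∑ E : Finset α, (if D ⊆ E then ∑ x ∈ E \ D, r E x else 0)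
          = ∑ y : α, ∑ F : Finset α,
              (if (D ⊆ F ∧ y ∈ F) ∧ y ∉ D then r F y else 0) := by
        rw [Finset.sum_comm]
        refine Finset.sum_congr rfl fun F _ => ?_
        by_cases h : D ⊆ F
        · simp only [h, if_true, true_and]
          rw [← Finset.sum_filter]
          refine Finset.sum_congr ?_ fun _ _ => rfl
          ext y; simp [Finset.mem_sdiff, and_comm]
        · simp [h]
      rw [lhs', rhs']
      refine Finset.sum_congr rfl fun y _ => ?_
      by_cases hy : y ∈ D
      · have l0 : ∀ E : Finset α,
            (if D ⊆ E ∧ y ∉ E then r (insert y E) y else 0) = 0 := fun E => by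
          rw [if_neg]; rintro ⟨hDE, hyE⟩; exact hyE (hDE hy)
        have r0 : ∀ F : Finset α,
            (if (D ⊆ F ∧ y ∈ F) ∧ y ∉ D then r F y else 0) = 0 := fun F => by
          rw [if_neg]; rintro ⟨_, hyD⟩; exact hyD hy
        simp only [l0, r0]
      · rw [← Finset.sum_filter, ← Finset.sum_filter]
        refine Finset.sum_nbij' (fun E => insert y E) (fun F => F.erase y)
          ?_ ?_ ?_ ?_ ?_
        · intro E hE
          simp only [Finset.mem_filter, Finset.mem_univ, true_and] at hE ⊢
          exact ⟨⟨hE.1.trans (Finset.subset_insert _ _),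
            Finset.mem_insert_self _ _⟩, hy⟩
        · intro F hF
          simp only [Finset.mem_filter, Finset.mem_univ, true_and] at hF ⊢
          exact ⟨fun a ha => Finset.mem_erase.2 ⟨fun h => hy (h ▸ ha), hF.1.1 ha⟩,
            Finset.notMem_erase _ _⟩
        · intro E hE
          simp only [Finset.mem_filter, Finset.mem_univ, true_and] at hE
          exact Finset.erase_insert hE.2
        · intro F hF
          simp only [Finset.mem_filter, Finset.mem_univ, true_and] at hF
          exact Finset.insert_erase hF.1.2
        · intro E _; rfl
    -- conservation collapses everything to the value at `univ`
    have split : ∀ E : Finset α, D ⊆ E →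
        ∑ x ∈ D, r E x = ∑ x ∈ E, r E x - ∑ x ∈ E \ D, r E x := by
      intro E hDE
      rw [← Finset.sum_sdiff hDE]
      ring
    calc ∑ x ∈ D, ∑ E : Finset α, (if D ⊆ E then r E x else 0)
        = ∑ E : Finset α, (if D ⊆ E then ∑ x ∈ D, r E x else 0) := step1
      _ = ∑ E : Finset α, ((if D ⊆ E then ∑ x ∈ E, r E x else 0)
            - (if D ⊆ E then ∑ x ∈ E \ D, r E x else 0)) := by
          refine Finset.sum_congr rfl fun E _ => ?_
          by_cases h : D ⊆ E
          · simp only [h, if_true]; exact split E h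
          · simp [h]
      _ = ∑ E : Finset α, (if D ⊆ E then ∑ x ∈ E, r E x else 0)
            - ∑ E : Finset α, (if D ⊆ E then ∑ y ∈ Eᶜ, r (insert y E) y else 0) := by
          rw [Finset.sum_sub_distrib, hAB]
      _ = ∑ E : Finset α, ((if D ⊆ E then ∑ x ∈ E, r E x else 0)
            - (if D ⊆ E then ∑ y ∈ Eᶜ, r (insert y E) y else 0)) := by
          rw [Finset.sum_sub_distrib]
      _ = ∑ E : Finset α, (if E = Finset.univ then (1 : ℝ) else 0) := by
          refine Finset.sum_congr rfl fun E _ => ?_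
          by_cases hu : E = Finset.univ
          · subst hu
            simp only [Finset.subset_univ, if_true, Finset.compl_univ,
              Finset.sum_empty, sub_zero, if_pos rfl]
            simpa using h1
          · by_cases h : D ⊆ E
            · have hne : E.Nonempty := hD.mono h
              simp only [h, if_true, hu, if_false]
              rw [h2 E hne hu]; ring
            · simp [h, hu]
      _ = 1 := by simp
  · -- Block–Marschak polynomials recover `r`
    intro D x hx
    unfold bmK
    have step1 : ∀ E : Finset α,
        (if D ⊆ E then (-1 : ℝ) ^ (E \ D).card
            * ∑ F : Finset α, (if E ⊆ F then r F x else 0) else 0)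
        = ∑ F : Finset α,
            (if D ⊆ E ∧ E ⊆ F then (-1 : ℝ) ^ (E \ D).card else 0) * r F x := by
      intro E
      by_cases h : D ⊆ E
      · simp only [h, if_true, true_and, Finset.mul_sum]
        refine Finset.sum_congr rfl fun F _ => ?_
        by_cases hEF : E ⊆ F <;> simp [hEF]
      · simp only [h, if_false, false_and, if_false, zero_mul,
          Finset.sum_const, smul_zero]
    calc ∑ E : Finset α, (if D ⊆ E then (-1 : ℝ) ^ (E \ D).card
              * ∑ F : Finset α, (if E ⊆ F then r F x else 0) else 0)
        = ∑ E : Finset α, ∑ F : Finset α,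
            (if D ⊆ E ∧ E ⊆ F then (-1 : ℝ) ^ (E \ D).card else 0) * r F x := by
          exact Finset.sum_congr rfl fun E _ => step1 E
      _ = ∑ F : Finset α, (∑ E : Finset α,
            (if D ⊆ E ∧ E ⊆ F then (-1 : ℝ) ^ (E \ D).card else 0)) * r F x := by
          rw [Finset.sum_comm]
          exact Finset.sum_congr rfl fun F _ => (Finset.sum_mul _ _ _).symm
      _ = ∑ F : Finset α, (if F = D then (1 : ℝ) else 0) * r F x := by
          exact Finset.sum_congr rfl fun F _ => by rw [aux_inner]
      _ = r D x := by
          rw [Finset.sum_congr rfl (fun F _ => ite_mul (F = D) (1 : ℝ) 0 (r F x))]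
          simp
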